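/- arXiv:2406.02140 — 2 statements merged into one kernel-verified Lean document; each statement's English description precedes it below -/
import Mathlib

section
/- There exists a universal constant C > 0 with the following property. Let n, m ∈ ℕ, ε ∈ (0, 1/2), δ ∈ [0, 1], p ∈ [2, ∞), and A ∈ ℝ^{m×n}. If a mechanism M : ℝ^n → (probability measures on ℝ^m) is (ε,δ)-differentially private, then err_{ℓ_p^p}(M, A) ≥ (1 − δ̃) · m^{1/p − 1/2} · ‖A‖₁ / (C ε √n), where δ̃ = 2 e^{2ε} (e^{1/2} − 1) δ / (e^ε − 1). -/
open MeasureTheory Matrix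
open scoped ENNReal

noncomputable section

namespace DPPaper

variable {ι κ : Type*}

/-- Two inputs `x, x' : ι → ℝ` are neighboring if `‖x - x'‖₁ ≤ 1`. -/
def Neighboring [Fintype ι] (x x' : ι → ℝ) : Prop :=
  ∑ i, |x i - x' i| ≤ 1

/-- A mechanism `M` (a map from inputs to probability measures on an output space `Ω`)
is `(ε,δ)`-differentially private if for all neighboring inputs and all measurable sets `S`,
`M x S ≤ e^ε · M x' S + δ`. -/
def IsDP [Fintype ι] {Ω : Type*} [MeasurableSpace Ω]
    (M : (ι → ℝ) → Measure Ω) (ε δ : ℝ) : Prop :=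
  ∀ x x' : ι → ℝ, Neighboring x x' → ∀ S : Set Ω, MeasurableSet S →
    M x S ≤ ENNReal.ofReal (Real.exp ε) * M x' S + ENNReal.ofReal δ

/-- The `ℓ_p^p`-error of a mechanism `M` on the query matrix `A`:
`sup_x (E_{Y ~ M x} [ ‖Y - A x‖_p^p ])^{1/p}`, valued in `ℝ≥0∞`. -/
def errLp [Fintype ι] [Fintype κ] (M : (ι → ℝ) → Measure (κ → ℝ))
    (A : Matrix κ ι ℝ) (p : ℝ) : ℝ≥0∞ :=
  ⨆ x : ι → ℝ,
    (∫⁻ y, ENNReal.ofReal (∑ i, |y i - A.mulVec x i| ^ p) ∂(M x)) ^ (1 / p)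

/-- The `q`-trace of a square matrix: `(∑ i, U i i ^ q)^{1/q}`. -/
def trq [Fintype κ] (q : ℝ) (U : Matrix κ κ ℝ) : ℝ :=
  (∑ i, (U i i) ^ q) ^ (1 / q)

/-- The `1 → 2` operator norm of a matrix: the largest `ℓ₂`-norm of a column. -/
def norm12 [Fintype ι] [Fintype κ] (R : Matrix κ ι ℝ) : ℝ :=
  ⨆ j : ι, Real.sqrt (∑ i, (R i j) ^ 2)

/-- The factorization norm `γ_{(p)}(A)`. -/
def gammaP [Fintype ι] [Fintype κ] (p : ℝ) (A : Matrix κ ι ℝ) : ℝ :=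
  sInf { c : ℝ | ∃ (k : ℕ) (L : Matrix κ (Fin k) ℝ) (R : Matrix (Fin k) ι ℝ),
    L * R = A ∧ c = Real.sqrt (trq (p / 2) (L * Lᵀ)) * norm12 R }

/-- The Schatten-1 norm of a matrix: the trace of the PSD square root of `Aᵀ * A`,
i.e. the sum of the singular values of `A`. -/
def schatten1 [Fintype ι] [Fintype κ] [DecidableEq ι] (A : Matrix κ ι ℝ) : ℝ :=
  (((Matrix.posSemidef_conjTranspose_mul_self A).1.eigenvectorUnitary : Matrix ι ι ℝ) *
    Matrix.diagonal ((RCLike.ofReal : ℝ → ℝ) ∘ Real.sqrt ∘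
      (Matrix.posSemidef_conjTranspose_mul_self A).1.eigenvalues) *
    (star (Matrix.posSemidef_conjTranspose_mul_self A).1.eigenvectorUnitary : Matrix ι ι ℝ)).trace

/-- The sensitivity polytope `A B₁^n = {A x : ‖x‖₁ ≤ 1}`. -/
def sensPolytope [Fintype ι] (A : Matrix κ ι ℝ) : Set (κ → ℝ) :=
  {v | ∃ x : ι → ℝ, (∑ i, |x i|) ≤ 1 ∧ v = A.mulVec x}

/-- The width of a set `K` in direction `θ`. -/
def width [Fintype κ] (K : Set (κ → ℝ)) (θ : κ → ℝ) : ℝ :=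
  sSup ((fun v => ∑ i, θ i * v i) '' K) - sInf ((fun v => ∑ i, θ i * v i) '' K)

/-- `κ(A)`: the minimal width of the sensitivity polytope over all unit directions. -/
def kappa [Fintype ι] [Fintype κ] (A : Matrix κ ι ℝ) : ℝ :=
  sInf { c : ℝ | ∃ θ : κ → ℝ, (∑ i, (θ i) ^ 2) = 1 ∧ c = width (sensPolytope A) θ }

/-- The prefix-sum (continual counting) matrix: lower-triangular all ones. -/
def Aprefix (n : ℕ) : Matrix (Fin n) (Fin n) ℝ :=
  fun i j => if j ≤ i then 1 else 0

/-- The covariance matrix of a measure on `κ → ℝ`. -/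
def covMatrix [Fintype κ] (μ : Measure (κ → ℝ)) : Matrix κ κ ℝ :=
  fun i j => ∫ y, (y i - ∫ y', y' i ∂μ) * (y j - ∫ y', y' j ∂μ) ∂μ

/-- The parity query matrix `Q_{d,w}`: rows indexed by `w`-element subsets `P` of `{1,…,d}`,
columns indexed by points of `{-1,1}^d` (encoded as `Fin d → Bool`), entry `∏_{i ∈ P} x_i`. -/
def parityMatrix (d w : ℕ) : Matrix {P : Finset (Fin d) // P.card = w} (Fin d → Bool) ℝ :=
  fun P b => ∏ i ∈ P.1, (if b i then (1 : ℝ) else -1)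

/-- The Hadamard matrices: `H_0 = [1]`, `H_{d+1} = [[H_d, H_d], [H_d, -H_d]]`. -/
def Hadamard : (d : ℕ) → Matrix (Fin (2 ^ d)) (Fin (2 ^ d)) ℝ
  | 0 => fun _ _ => 1
  | (d + 1) =>
    Matrix.reindex
      (finSumFinEquiv.trans (finCongr (by rw [pow_succ, mul_two])))
      (finSumFinEquiv.trans (finCongr (by rw [pow_succ, mul_two])))
      (Matrix.fromBlocks (Hadamard d) (Hadamard d) (Hadamard d) (-(Hadamard d)))

end DPPaper

open DPPaper

namespace DPAux

open Finset

variable {n m : ℕ}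


variable {n m : ℕ}

def sqrtM (A : Matrix (Fin m) (Fin n) ℝ) : Matrix (Fin n) (Fin n) ℝ :=
  ((Matrix.posSemidef_conjTranspose_mul_self A).1.eigenvectorUnitary : Matrix (Fin n) (Fin n) ℝ) *
    Matrix.diagonal ((RCLike.ofReal : ℝ → ℝ) ∘ Real.sqrt ∘
      (Matrix.posSemidef_conjTranspose_mul_self A).1.eigenvalues) *
    (star (Matrix.posSemidef_conjTranspose_mul_self A).1.eigenvectorUnitary : Matrix (Fin n) (Fin n) ℝ)

lemma sqrtM_spec (A : Matrix (Fin m) (Fin n) ℝ) :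
    sqrtM A = ((Matrix.posSemidef_conjTranspose_mul_self A).1.eigenvectorUnitary : Matrix (Fin n) (Fin n) ℝ)
      * diagonal (fun i => Real.sqrt ((Matrix.posSemidef_conjTranspose_mul_self A).1.eigenvalues i))
      * star ((Matrix.posSemidef_conjTranspose_mul_self A).1.eigenvectorUnitary : Matrix (Fin n) (Fin n) ℝ) :=
  rfl

lemma sqrtM_psd (A : Matrix (Fin m) (Fin n) ℝ) : (sqrtM A).PosSemidef := by
  rw [sqrtM_spec, Matrix.star_eq_conjTranspose]
  exact (Matrix.PosSemidef.diagonal (fun i => Real.sqrt_nonneg _)).mul_mul_conjTranspose_same _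

lemma sqrtM_mul_self (A : Matrix (Fin m) (Fin n) ℝ) : sqrtM A * sqrtM A = Aᴴ * A := by
  set hPSD := Matrix.posSemidef_conjTranspose_mul_self A
  set V : Matrix (Fin n) (Fin n) ℝ := (hPSD.1.eigenvectorUnitary : Matrix (Fin n) (Fin n) ℝ)
  have hVsV : star V * V = 1 := Matrix.mem_unitaryGroup_iff'.mp hPSD.1.eigenvectorUnitary.2
  have hsp := hPSD.1.spectral_theorem
  rw [Unitary.conjStarAlgAut_apply, RCLike.ofReal_real_eq_id, Function.id_comp] at hsp
  have hd : (fun i => Real.sqrt (hPSD.1.eigenvalues i) * Real.sqrt (hPSD.1.eigenvalues i))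
      = hPSD.1.eigenvalues := by
    funext i
    exact Real.mul_self_sqrt (hPSD.eigenvalues_nonneg i)
  rw [sqrtM_spec]
  calc V * diagonal (fun i => Real.sqrt (hPSD.1.eigenvalues i)) * star V
        * (V * diagonal (fun i => Real.sqrt (hPSD.1.eigenvalues i)) * star V)
      = V * (diagonal (fun i => Real.sqrt (hPSD.1.eigenvalues i)) * ((star V * V) *
          (diagonal (fun i => Real.sqrt (hPSD.1.eigenvalues i)) * star V))) := by
        simp only [Matrix.mul_assoc]
    _ = V * ((diagonal (fun i => Real.sqrt (hPSD.1.eigenvalues i))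
          * diagonal (fun i => Real.sqrt (hPSD.1.eigenvalues i))) * star V) := by
        rw [hVsV, Matrix.one_mul, Matrix.mul_assoc]
    _ = Aᴴ * A := by
        rw [Matrix.diagonal_mul_diagonal, hd, ← Matrix.mul_assoc]
        exact hsp.symm



lemma lintegral_le_of_meas_le {Ω : Type*} [MeasurableSpace Ω]
    (μ ν : Measure Ω) {E D B : ℝ} (hD : 0 ≤ D) (hB : 0 ≤ B)
    (hdp : ∀ S : Set Ω, MeasurableSet S → μ S ≤ ENNReal.ofReal E * ν S + ENNReal.ofReal D)
    {g : Ω → ℝ} (hg : Measurable g) (hg0 : ∀ ω, 0 ≤ g ω) (hgB : ∀ ω, g ω ≤ B) :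
    ∫⁻ ω, ENNReal.ofReal (g ω) ∂μ
      ≤ ENNReal.ofReal E * ∫⁻ ω, ENNReal.ofReal (g ω) ∂ν
        + ENNReal.ofReal D * ENNReal.ofReal B := by
  have hmu := lintegral_eq_lintegral_meas_lt μ (Filter.Eventually.of_forall hg0) hg.aemeasurable
  have hnu := lintegral_eq_lintegral_meas_lt ν (Filter.Eventually.of_forall hg0) hg.aemeasurable
  rw [hmu, hnu]
  have hsplit : Set.Ioi (0:ℝ) = Set.Ioc 0 B ∪ Set.Ioi B := (Set.Ioc_union_Ioi_eq_Ioi hB).symm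
  have hdisj : Disjoint (Set.Ioc (0:ℝ) B) (Set.Ioi B) := by
    rw [Set.disjoint_left]
    rintro t ⟨-, h1⟩ h2
    exact absurd h1 (not_le.mpr h2)
  have hmeasν : Measurable fun t : ℝ => ν {a | t < g a} := by
    apply Antitone.measurable
    intro t₁ t₂ hle
    exact measure_mono (fun a ha => lt_of_le_of_lt hle ha)
  have htailμ : ∫⁻ t in Set.Ioi B, μ {a | t < g a} = 0 := by
    have hz : ∀ t ∈ Set.Ioi B, μ {a | t < g a} = 0 := by
      intro t ht
      have : {a | t < g a} = (∅ : Set Ω) := by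
        ext a
        simp only [Set.mem_setOf_eq, Set.mem_empty_iff_false, iff_false, not_lt]
        exact (hgB a).trans (le_of_lt ht)
      simp [this]
    calc ∫⁻ t in Set.Ioi B, μ {a | t < g a}
        = ∫⁻ _ in Set.Ioi B, 0 :=
          setLIntegral_congr_fun measurableSet_Ioi hz
      _ = 0 := lintegral_zero
  have key : ∫⁻ t in Set.Ioi (0:ℝ), μ {a | t < g a}
      = ∫⁻ t in Set.Ioc (0:ℝ) B, μ {a | t < g a} := by
    rw [hsplit, lintegral_union measurableSet_Ioi hdisj, htailμ, add_zero]
  rw [key]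
  have step1 : ∫⁻ t in Set.Ioc (0:ℝ) B, μ {a | t < g a}
      ≤ ∫⁻ t in Set.Ioc (0:ℝ) B, (ENNReal.ofReal E * ν {a | t < g a} + ENNReal.ofReal D) :=
    lintegral_mono fun t => hdp _ (measurableSet_lt measurable_const hg)
  have step2 : ∫⁻ t in Set.Ioc (0:ℝ) B, (ENNReal.ofReal E * ν {a | t < g a} + ENNReal.ofReal D)
      = ENNReal.ofReal E * (∫⁻ t in Set.Ioc (0:ℝ) B, ν {a | t < g a})
        + ENNReal.ofReal D * volume (Set.Ioc (0:ℝ) B) := by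
    rw [lintegral_add_right _ measurable_const, setLIntegral_const,
      lintegral_const_mul _ hmeasν]
  refine step1.trans (step2.trans_le ?_)
  have h3 : (∫⁻ t in Set.Ioc (0:ℝ) B, ν {a | t < g a})
      ≤ ∫⁻ t in Set.Ioi (0:ℝ), ν {a | t < g a} :=
    lintegral_mono_set Set.Ioc_subset_Ioi_self
  have h4 : volume (Set.Ioc (0:ℝ) B) = ENNReal.ofReal B := by
    rw [Real.volume_Ioc, sub_zero]
  rw [h4]
  gcongr

lemma pair_bound {Ω : Type*} [MeasurableSpace Ω]
    (μp μm : Measure Ω) [IsProbabilityMeasure μp]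
    {Ek Dk : ℝ} (hEk : 1 ≤ Ek) (hDk0 : 0 ≤ Dk) (hDk1 : Dk ≤ 1)
    (hgp : ∀ S : Set Ω, MeasurableSet S → μp S ≤ ENNReal.ofReal Ek * μm S + ENNReal.ofReal Dk)
    {f : Ω → ℝ} (hf : Measurable f) (c : ℝ) {s : ℝ} (hs : 0 ≤ s) :
    ENNReal.ofReal (2 * s * (1 - Dk) / Ek)
      ≤ (∫⁻ ω, ENNReal.ofReal |f ω - (c + s)| ∂μp)
        + ∫⁻ ω, ENNReal.ofReal |f ω - (c - s)| ∂μm := by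
  have hEk0 : (0:ℝ) < Ek := lt_of_lt_of_le one_pos hEk
  set g : Ω → ℝ := fun ω => min (2 * s) (max 0 (f ω - c + s)) with hgdef
  have hgmeas : Measurable g :=
    Measurable.min measurable_const (Measurable.max measurable_const ((hf.sub_const c).add_const s))
  have hg0 : ∀ ω, 0 ≤ g ω := fun ω => le_min (by positivity) (le_max_left _ _)
  have hgB : ∀ ω, g ω ≤ 2 * s := fun ω => min_le_left _ _
  have key1 : ∀ ω, 2 * s - g ω ≤ |f ω - (c + s)| := by
    intro ω
    have h2s : (0:ℝ) ≤ 2 * s := by positivity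
    rcases le_or_gt (f ω - c + s) 0 with h1 | h1
    · have hg' : g ω = 0 := by
        simp only [hgdef]
        rw [max_eq_left h1, min_eq_right h2s]
      rw [hg', sub_zero]
      calc (2:ℝ) * s ≤ -(f ω - (c+s)) := by linarith
        _ ≤ |f ω - (c + s)| := neg_le_abs _
    · have hmax : max 0 (f ω - c + s) = f ω - c + s := max_eq_right h1.le
      rcases le_or_gt (2*s) (f ω - c + s) with h2 | h2
      · have hg' : g ω = 2 * s := by simp only [hgdef]; rw [hmax, min_eq_left h2]
        rw [hg', sub_self]
        exact abs_nonneg _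
      · have hg' : g ω = f ω - c + s := by simp only [hgdef]; rw [hmax, min_eq_right h2.le]
        rw [hg']
        have hlt : f ω - (c + s) < 0 := by linarith
        rw [abs_of_neg hlt]
        linarith
  have key2 : ∀ ω, g ω ≤ |f ω - (c - s)| := by
    intro ω
    calc g ω ≤ max 0 (f ω - c + s) := min_le_right _ _
      _ ≤ |f ω - c + s| := max_le (abs_nonneg _) (le_abs_self _)
      _ = |f ω - (c - s)| := by ring_nf
  set Lp := ∫⁻ ω, ENNReal.ofReal |f ω - (c + s)| ∂μp with hLp
  set Lm := ∫⁻ ω, ENNReal.ofReal |f ω - (c - s)| ∂μm with hLm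
  have E1 : ENNReal.ofReal (2 * s)
      ≤ (∫⁻ ω, ENNReal.ofReal (g ω) ∂μp) + Lp := by
    have hpt : ∀ ω, 2 * s ≤ g ω + |f ω - (c + s)| := fun ω => by
      have := key1 ω; linarith
    calc ENNReal.ofReal (2 * s) = ∫⁻ _, ENNReal.ofReal (2 * s) ∂μp := by
          simp
      _ ≤ ∫⁻ ω, ENNReal.ofReal (g ω + |f ω - (c + s)|) ∂μp :=
          lintegral_mono fun ω => ENNReal.ofReal_le_ofReal (hpt ω)
      _ = ∫⁻ ω, (ENNReal.ofReal (g ω) + ENNReal.ofReal (|f ω - (c + s)|)) ∂μp :=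
          lintegral_congr fun ω => ENNReal.ofReal_add (hg0 ω) (abs_nonneg _)
      _ = _ := lintegral_add_left hgmeas.ennreal_ofReal _
  have E2 := lintegral_le_of_meas_le μp μm hDk0 (by positivity : (0:ℝ) ≤ 2*s) hgp hgmeas hg0 hgB
  have E3 : ∫⁻ ω, ENNReal.ofReal (g ω) ∂μm ≤ Lm :=
    lintegral_mono fun ω => ENNReal.ofReal_le_ofReal (key2 ω)
  have hcomb : ENNReal.ofReal (2 * s)
      ≤ ENNReal.ofReal Ek * Lm + Lp + ENNReal.ofReal (2 * s * Dk) := by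
    have hDk2s : ENNReal.ofReal Dk * ENNReal.ofReal (2*s) = ENNReal.ofReal (2 * s * Dk) := by
      rw [← ENNReal.ofReal_mul hDk0]; ring_nf
    calc ENNReal.ofReal (2*s) ≤ (∫⁻ ω, ENNReal.ofReal (g ω) ∂μp) + Lp := E1
      _ ≤ (ENNReal.ofReal Ek * ∫⁻ ω, ENNReal.ofReal (g ω) ∂μm
            + ENNReal.ofReal Dk * ENNReal.ofReal (2*s)) + Lp := by gcongr
      _ ≤ (ENNReal.ofReal Ek * Lm + ENNReal.ofReal Dk * ENNReal.ofReal (2*s)) + Lp := by gcongr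
      _ = ENNReal.ofReal Ek * Lm + Lp + ENNReal.ofReal (2 * s * Dk) := by
          rw [hDk2s]; ring
  have hsub : ENNReal.ofReal (2 * s * (1 - Dk)) ≤ ENNReal.ofReal Ek * Lm + Lp := by
    have h1 : ENNReal.ofReal (2*s) - ENNReal.ofReal (2*s*Dk) ≤ ENNReal.ofReal Ek * Lm + Lp :=
      tsub_le_iff_right.mpr hcomb
    calc ENNReal.ofReal (2*s*(1-Dk)) = ENNReal.ofReal (2*s - 2*s*Dk) := by ring_nf
      _ = ENNReal.ofReal (2*s) - ENNReal.ofReal (2*s*Dk) :=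
          ENNReal.ofReal_sub _ (by positivity)
      _ ≤ _ := h1
  have hone : (1:ℝ≥0∞) ≤ ENNReal.ofReal Ek := by
    rw [← ENNReal.ofReal_one]
    exact ENNReal.ofReal_le_ofReal hEk
  have hfinal : ENNReal.ofReal Ek * ENNReal.ofReal (2*s*(1-Dk)/Ek)
      ≤ ENNReal.ofReal Ek * (Lp + Lm) := by
    have hmul : ENNReal.ofReal Ek * ENNReal.ofReal (2*s*(1-Dk)/Ek)
        = ENNReal.ofReal (2*s*(1-Dk)) := by
      rw [← ENNReal.ofReal_mul hEk0.le]
      congr 1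
      field_simp
    rw [hmul]
    refine hsub.trans ?_
    calc ENNReal.ofReal Ek * Lm + Lp ≤ ENNReal.ofReal Ek * Lm + ENNReal.ofReal Ek * Lp := by
          gcongr
          exact le_mul_of_one_le_left zero_le hone
      _ = ENNReal.ofReal Ek * (Lp + Lm) := by ring
  have hne0 : ENNReal.ofReal Ek ≠ 0 := by
    simp [ENNReal.ofReal_pos.mpr hEk0]
    positivity
  exact (ENNReal.mul_le_mul_iff_right hne0 ENNReal.ofReal_ne_top).mp hfinal





lemma chain_bound {Ω : Type*} [MeasurableSpace Ω] {M : (Fin n → ℝ) → Measure Ω}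
    {ε δ : ℝ} (hδ : 0 ≤ δ)
    (hdp : ∀ x x' : Fin n → ℝ, (∑ j, |x j - x' j|) ≤ 1 → ∀ S : Set Ω, MeasurableSet S →
      M x S ≤ ENNReal.ofReal (Real.exp ε) * M x' S + ENNReal.ofReal δ)
    (x : Fin n → ℝ) (i : Fin n) (a : ℝ) :
    ∀ (l : ℕ) (S : Set Ω), MeasurableSet S →
      M (Function.update x i a) S
        ≤ ENNReal.ofReal (Real.exp (l * ε)) * M (Function.update x i (a - l)) S
          + ENNReal.ofReal (δ * ∑ j ∈ Finset.range l, Real.exp (j * ε)) := by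
  intro l
  induction l with
  | zero =>
      intro S hS
      simp
  | succ l ih =>
      intro S hS
      have hnb : (∑ j, |Function.update x i (a - l) j - Function.update x i (a - (l+1:ℕ)) j|) ≤ 1 := by
        have hcalc : ∀ j, |Function.update x i (a - l) j - Function.update x i (a - (l+1:ℕ)) j|
            = if j = i then 1 else 0 := by
          intro j
          by_cases hj : j = i
          · subst hj
            rw [Function.update_self, Function.update_self, if_pos rfl]
            have h1 : (a - (l:ℝ)) - (a - ((l+1:ℕ):ℝ)) = 1 := by push_cast; ring
            rw [h1, abs_one]
          · simp [Function.update_of_ne hj, hj]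
        rw [Finset.sum_congr rfl fun j _ => hcalc j]
        simp
      have step := hdp _ _ hnb S hS
      have ihS := ih S hS
      have e1 : ENNReal.ofReal (Real.exp ((l:ℝ) * ε)) * ENNReal.ofReal (Real.exp ε)
          = ENNReal.ofReal (Real.exp (((l+1:ℕ):ℝ) * ε)) := by
        rw [← ENNReal.ofReal_mul (Real.exp_nonneg _), ← Real.exp_add]
        congr 1
        push_cast
        ring
      have e2 : ENNReal.ofReal (Real.exp ((l:ℝ) * ε)) * ENNReal.ofReal δ
            + ENNReal.ofReal (δ * ∑ j ∈ Finset.range l, Real.exp (j * ε))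
          = ENNReal.ofReal (δ * ∑ j ∈ Finset.range (l+1), Real.exp (j * ε)) := by
        rw [← ENNReal.ofReal_mul (Real.exp_nonneg _),
          ← ENNReal.ofReal_add (by positivity) (by positivity), Finset.sum_range_succ, mul_add]
        congr 1
        ring
      calc M (Function.update x i a) S
          ≤ ENNReal.ofReal (Real.exp (l * ε)) * M (Function.update x i (a - l)) S
            + ENNReal.ofReal (δ * ∑ j ∈ Finset.range l, Real.exp (j * ε)) := ihS
        _ ≤ ENNReal.ofReal (Real.exp (l * ε))
              * (ENNReal.ofReal (Real.exp ε) * M (Function.update x i (a - (l+1:ℕ))) S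
                  + ENNReal.ofReal δ)
            + ENNReal.ofReal (δ * ∑ j ∈ Finset.range l, Real.exp (j * ε)) := by gcongr
        _ = ENNReal.ofReal (Real.exp ((l:ℝ) * ε)) * ENNReal.ofReal (Real.exp ε)
              * M (Function.update x i (a - (l+1:ℕ))) S
            + (ENNReal.ofReal (Real.exp ((l:ℝ) * ε)) * ENNReal.ofReal δ
              + ENNReal.ofReal (δ * ∑ j ∈ Finset.range l, Real.exp (j * ε))) := by ring
        _ = _ := by rw [e1, e2]





lemma exists_Q (A : Matrix (Fin m) (Fin n) ℝ) :
    ∃ Q : Matrix (Fin m) (Fin n) ℝ,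
      Qᵀ * A = sqrtM A ∧
      ∀ w : Fin m → ℝ, ∑ i, ((Qᵀ *ᵥ w) i)^2 ≤ ∑ j, (w j)^2 := by
  set hPSD := Matrix.posSemidef_conjTranspose_mul_self A with hPSDdef
  set S := sqrtM A with hSdef
  have hS : S.PosSemidef := sqrtM_psd A
  have hH : (Aᴴ * A).IsHermitian := hPSD.1
  have hSS : S * S = Aᴴ * A := sqrtM_mul_self A
  set V : Matrix (Fin n) (Fin n) ℝ := (hH.eigenvectorUnitary : Matrix (Fin n) (Fin n) ℝ) with hVdef
  set ev : Fin n → ℝ := fun i => Real.sqrt (hH.eigenvalues i) with hevdef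
  have hspec : S = V * diagonal ev * star V := sqrtM_spec A
  have hVVs : V * star V = 1 := Matrix.mem_unitaryGroup_iff.mp hH.eigenvectorUnitary.2
  have hVsV : star V * V = 1 := Matrix.mem_unitaryGroup_iff'.mp hH.eigenvectorUnitary.2
  have sand : ∀ d e : Fin n → ℝ,
      (V * diagonal d * star V) * (V * diagonal e * star V)
        = V * diagonal (fun i => d i * e i) * star V := by
    intro d e
    calc (V * diagonal d * star V) * (V * diagonal e * star V)
        = V * (diagonal d * ((star V * V) * (diagonal e * star V))) := by
          simp only [Matrix.mul_assoc]
      _ = V * (diagonal d * (diagonal e * star V)) := by rw [hVsV, Matrix.one_mul]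
      _ = V * ((diagonal d * diagonal e) * star V) := by rw [Matrix.mul_assoc]
      _ = V * diagonal (fun i => d i * e i) * star V := by
          rw [Matrix.diagonal_mul_diagonal, Matrix.mul_assoc]
  set N : Matrix (Fin n) (Fin n) ℝ := V * diagonal (fun i => (ev i)⁻¹) * star V with hNdef
  set Q : Matrix (Fin m) (Fin n) ℝ := A * N with hQdef
  have hstarD : star (diagonal fun i => (ev i)⁻¹) = diagonal fun i => (ev i)⁻¹ := by
    rw [Matrix.star_eq_conjTranspose, Matrix.diagonal_conjTranspose]
    congr 1
  have hstarN : star N = N := by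
    rw [hNdef]
    calc star ((V * diagonal fun i => (ev i)⁻¹) * star V)
        = star (star V) * star (V * diagonal fun i => (ev i)⁻¹) := StarMul.star_mul _ _
      _ = V * (star (diagonal fun i => (ev i)⁻¹) * star V) := by
          rw [star_star, StarMul.star_mul]
      _ = V * (diagonal (fun i => (ev i)⁻¹) * star V) := by rw [hstarD]
      _ = _ := by rw [Matrix.mul_assoc]
  have hNT : Nᵀ = N := by
    rw [← Matrix.conjTranspose_eq_transpose_of_trivial, ← Matrix.star_eq_conjTranspose, hstarN]
  have hQT : Qᵀ = N * Aᴴ := by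
    rw [hQdef, Matrix.transpose_mul, hNT, ← Matrix.conjTranspose_eq_transpose_of_trivial]
  have hSSsand : S * S = V * diagonal (fun i => ev i * ev i) * star V := by
    rw [hspec, sand]
  have hNSS : N * (S * S) = S := by
    rw [hSSsand, hNdef, sand]
    have hfun : (fun i => (fun i => (ev i)⁻¹) i * (fun i => ev i * ev i) i) = ev := by
      funext i
      show (ev i)⁻¹ * (ev i * ev i) = ev i
      rcases eq_or_ne (ev i) 0 with h | h
      · rw [h]; simp
      · field_simp
    rw [hfun, ← hspec]
  have hQ1 : Qᵀ * A = S := by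
    rw [hQT, Matrix.mul_assoc, ← hSS, hNSS]
  have hQTQ : Qᵀ * Q = V * diagonal (fun i => ev i * (ev i)⁻¹) * star V := by
    have h0 : Qᵀ * Q = (Qᵀ * A) * N := by rw [hQdef, Matrix.mul_assoc]
    rw [h0, hQ1, hspec, hNdef, sand]
  have hsVt : star V = Vᵀ := by
    rw [Matrix.star_eq_conjTranspose, Matrix.conjTranspose_eq_transpose_of_trivial]
  have lemQF : ∀ (e : Fin n → ℝ), (∀ i, 0 ≤ e i) → (∀ i, e i ≤ 1) → ∀ u : Fin n → ℝ,
      u ⬝ᵥ ((V * diagonal e * star V) *ᵥ u) ≤ u ⬝ᵥ u := by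
    intro e he0 he1 u
    have hmv : (V * diagonal e * star V) *ᵥ u = V *ᵥ (diagonal e *ᵥ (Vᵀ *ᵥ u)) := by
      rw [← Matrix.mulVec_mulVec, ← Matrix.mulVec_mulVec, hsVt]
    have hdot : ∀ z : Fin n → ℝ, u ⬝ᵥ (V *ᵥ z) = (Vᵀ *ᵥ u) ⬝ᵥ z := by
      intro z
      rw [Matrix.dotProduct_mulVec, ← Matrix.mulVec_transpose]
    set t := Vᵀ *ᵥ u with htdef
    have htt : t ⬝ᵥ t = u ⬝ᵥ u := by
      have h1 : u ⬝ᵥ (V *ᵥ t) = t ⬝ᵥ t := hdot t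
      have h2 : V *ᵥ t = (V * Vᵀ) *ᵥ u := by rw [htdef, Matrix.mulVec_mulVec]
      rw [← h1, h2, ← hsVt, hVVs, Matrix.one_mulVec]
    calc u ⬝ᵥ ((V * diagonal e * star V) *ᵥ u) = t ⬝ᵥ (diagonal e *ᵥ t) := by
          rw [hmv, hdot]
      _ = ∑ i, t i * (e i * t i) := by
          simp [dotProduct, Matrix.mulVec_diagonal]
      _ ≤ ∑ i, t i * t i := by
          apply Finset.sum_le_sum
          intro i _
          have h1 : t i * (e i * t i) = e i * (t i * t i) := by ring
          have h2 : e i * (t i * t i) ≤ 1 * (t i * t i) :=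
            mul_le_mul_of_nonneg_right (he1 i) (mul_self_nonneg _)
          rw [h1]
          linarith
      _ = t ⬝ᵥ t := by simp [dotProduct]
      _ = u ⬝ᵥ u := htt
  have lemA : ∀ u : Fin n → ℝ, (Q *ᵥ u) ⬝ᵥ (Q *ᵥ u) ≤ u ⬝ᵥ u := by
    intro u
    have h1 : (Q *ᵥ u) ⬝ᵥ (Q *ᵥ u) = u ⬝ᵥ ((Qᵀ * Q) *ᵥ u) := by
      rw [Matrix.dotProduct_mulVec, ← Matrix.mulVec_transpose, Matrix.mulVec_mulVec,
        dotProduct_comm]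
    rw [h1, hQTQ]
    apply lemQF
    · intro i
      rcases eq_or_ne (ev i) 0 with h | h
      · simp [h]
      · rw [mul_inv_cancel₀ h]; norm_num
    · intro i
      rcases eq_or_ne (ev i) 0 with h | h
      · simp [h]
      · rw [mul_inv_cancel₀ h]
  refine ⟨Q, hQ1, ?_⟩
  intro w
  set v := Qᵀ *ᵥ w with hvdef
  have ha : ∑ i, v i ^ 2 = v ⬝ᵥ v := by
    simp [dotProduct, pow_two]
  have hb : ∑ j, w j ^ 2 = w ⬝ᵥ w := by
    simp [dotProduct, pow_two]
  have hvQ : w ⬝ᵥ (Q *ᵥ v) = v ⬝ᵥ v := by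
    rw [Matrix.dotProduct_mulVec, ← Matrix.mulVec_transpose]
  have hCS : w ⬝ᵥ (Q *ᵥ v) ≤ Real.sqrt (w ⬝ᵥ w) * Real.sqrt (v ⬝ᵥ v) := by
    have h1 : w ⬝ᵥ (Q *ᵥ v) ≤ Real.sqrt (∑ j, w j ^ 2) * Real.sqrt (∑ j, (Q *ᵥ v) j ^ 2) :=
      Real.sum_mul_le_sqrt_mul_sqrt Finset.univ w (Q *ᵥ v)
    have h2 : ∑ j, (Q *ᵥ v) j ^ 2 = (Q *ᵥ v) ⬝ᵥ (Q *ᵥ v) := by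
      simp [dotProduct, pow_two]
    have h3 : Real.sqrt ((Q *ᵥ v) ⬝ᵥ (Q *ᵥ v)) ≤ Real.sqrt (v ⬝ᵥ v) :=
      Real.sqrt_le_sqrt (lemA v)
    calc w ⬝ᵥ (Q *ᵥ v) ≤ Real.sqrt (∑ j, w j ^ 2) * Real.sqrt (∑ j, (Q *ᵥ v) j ^ 2) := h1
      _ = Real.sqrt (w ⬝ᵥ w) * Real.sqrt ((Q *ᵥ v) ⬝ᵥ (Q *ᵥ v)) := by rw [hb, h2]
      _ ≤ Real.sqrt (w ⬝ᵥ w) * Real.sqrt (v ⬝ᵥ v) :=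
          mul_le_mul_of_nonneg_left h3 (Real.sqrt_nonneg _)
  have hvv0 : (0:ℝ) ≤ v ⬝ᵥ v := by rw [← ha]; positivity
  have hww0 : (0:ℝ) ≤ w ⬝ᵥ w := by rw [← hb]; positivity
  have hmain : v ⬝ᵥ v ≤ w ⬝ᵥ w := by
    rcases eq_or_lt_of_le hvv0 with h0 | h0
    · rw [← h0]; exact hww0
    · have hs : Real.sqrt (v ⬝ᵥ v) ≤ Real.sqrt (w ⬝ᵥ w) := by
        have h2 : Real.sqrt (v ⬝ᵥ v) * Real.sqrt (v ⬝ᵥ v)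
            ≤ Real.sqrt (w ⬝ᵥ w) * Real.sqrt (v ⬝ᵥ v) := by
          rw [Real.mul_self_sqrt hvv0]
          exact hvQ ▸ hCS
        exact le_of_mul_le_mul_right h2 (Real.sqrt_pos.mpr h0)
      calc v ⬝ᵥ v = Real.sqrt (v ⬝ᵥ v) ^ 2 := (Real.sq_sqrt hvv0).symm
        _ ≤ Real.sqrt (w ⬝ᵥ w) ^ 2 := by
            apply pow_le_pow_left₀ (Real.sqrt_nonneg _) hs
        _ = w ⬝ᵥ w := Real.sq_sqrt hww0
  rw [ha, hb]
  exact hmain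





/-- Power-mean / Cauchy–Schwarz aggregation inequality. -/
lemma sum_abs_le {p : ℝ} (hp : 2 ≤ p) (v : Fin n → ℝ) (w : Fin m → ℝ)
    (hvw : ∑ i, (v i)^2 ≤ ∑ j, (w j)^2) :
    ∑ i, |v i| ≤ Real.sqrt n * (m:ℝ) ^ ((1:ℝ)/2 - 1/p) * (∑ j, |w j| ^ p) ^ ((1:ℝ)/p) := by
  have hp0 : (0:ℝ) < p := by linarith
  have h1 : ∑ i, |v i| ≤ ((n:ℝ)) ^ (1 - (2:ℝ)⁻¹) * (∑ i, |v i| ^ (2:ℝ)) ^ ((2:ℝ)⁻¹) := by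
    have := Real.inner_le_weight_mul_Lp_of_nonneg Finset.univ (p := 2) one_le_two
      (fun _ : Fin n => (1:ℝ)) (fun i => |v i|) (fun _ => zero_le_one) (fun i => abs_nonneg _)
    simpa using this
  have habs2 : ∀ i, |v i| ^ (2:ℝ) = v i ^ 2 := by
    intro i
    rw [show (2:ℝ) = ((2:ℕ):ℝ) by norm_num, Real.rpow_natCast, sq_abs]
  have h1' : ∑ i, |v i| ≤ Real.sqrt n * (∑ i, v i ^ 2) ^ ((2:ℝ)⁻¹) := by
    calc ∑ i, |v i| ≤ ((n:ℝ)) ^ (1 - (2:ℝ)⁻¹) * (∑ i, |v i| ^ (2:ℝ)) ^ ((2:ℝ)⁻¹) := h1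
      _ = Real.sqrt n * (∑ i, v i ^ 2) ^ ((2:ℝ)⁻¹) := by
          rw [Finset.sum_congr rfl fun i _ => habs2 i]
          congr 1
          rw [Real.sqrt_eq_rpow]
          norm_num
  have h2 : (∑ i, v i ^ 2) ^ ((2:ℝ)⁻¹) ≤ (∑ j, w j ^ 2) ^ ((2:ℝ)⁻¹) := by
    apply Real.rpow_le_rpow (by positivity) hvw (by norm_num)
  have hr1 : (1:ℝ) ≤ p / 2 := by linarith
  have h3 : ∑ j, w j ^ 2 ≤ ((m:ℝ)) ^ (1 - (p/2)⁻¹) * (∑ j, |w j| ^ p) ^ ((p/2)⁻¹) := by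
    have := Real.inner_le_weight_mul_Lp_of_nonneg Finset.univ (p := p/2) hr1
      (fun _ : Fin m => (1:ℝ)) (fun j => w j ^ 2) (fun _ => zero_le_one) (fun j => sq_nonneg _)
    have hpow : ∀ j, (w j ^ 2) ^ (p/2) = |w j| ^ p := by
      intro j
      rw [← sq_abs, ← Real.rpow_natCast |w j| 2, ← Real.rpow_mul (abs_nonneg _)]
      norm_num
      rw [show (2:ℝ) * (p/2) = p by ring]
    simpa [hpow] using this
  have h4 : (∑ j, w j ^ 2) ^ ((2:ℝ)⁻¹)
      ≤ (m:ℝ) ^ ((1:ℝ)/2 - 1/p) * (∑ j, |w j| ^ p) ^ ((1:ℝ)/p) := by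
    calc (∑ j, w j ^ 2) ^ ((2:ℝ)⁻¹)
        ≤ (((m:ℝ)) ^ (1 - (p/2)⁻¹) * (∑ j, |w j| ^ p) ^ ((p/2)⁻¹)) ^ ((2:ℝ)⁻¹) :=
          Real.rpow_le_rpow (by positivity) h3 (by norm_num)
      _ = (m:ℝ) ^ ((1:ℝ)/2 - 1/p) * (∑ j, |w j| ^ p) ^ ((1:ℝ)/p) := by
          have e1 : (1 - (p/2)⁻¹) * ((2:ℝ)⁻¹) = (1:ℝ)/2 - 1/p := by
            field_simp
          have e2 : ((p/2)⁻¹ : ℝ) * ((2:ℝ)⁻¹) = 1/p := by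
            field_simp
          rw [Real.mul_rpow (by positivity) (by positivity),
            ← Real.rpow_mul (by positivity), ← Real.rpow_mul (by positivity), e1, e2]
  calc ∑ i, |v i| ≤ Real.sqrt n * (∑ i, v i ^ 2) ^ ((2:ℝ)⁻¹) := h1'
    _ ≤ Real.sqrt n * (∑ j, w j ^ 2) ^ ((2:ℝ)⁻¹) :=
        mul_le_mul_of_nonneg_left h2 (Real.sqrt_nonneg _)
    _ ≤ Real.sqrt n * ((m:ℝ) ^ ((1:ℝ)/2 - 1/p) * (∑ j, |w j| ^ p) ^ ((1:ℝ)/p)) :=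
        mul_le_mul_of_nonneg_left h4 (Real.sqrt_nonneg _)
    _ = _ := by ring

/-- Jensen for `x ↦ x^(1/p)` via Hölder. -/
lemma lintegral_rpow_le {Ω : Type*} [MeasurableSpace Ω] (μ : Measure Ω) [IsProbabilityMeasure μ]
    {p : ℝ} (hp : 2 ≤ p) {H : Ω → ℝ≥0∞} (hH : AEMeasurable H μ) :
    ∫⁻ ω, (H ω) ^ ((1:ℝ)/p) ∂μ ≤ (∫⁻ ω, H ω ∂μ) ^ ((1:ℝ)/p) := by
  have hp1 : (1:ℝ) < p := by linarith
  have hp0 : p ≠ 0 := by positivity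
  have hpq := Real.HolderConjugate.conjExponent hp1
  have hHmeas : AEMeasurable (fun ω => (H ω) ^ ((1:ℝ)/p)) μ := hH.pow_const _
  have key := ENNReal.lintegral_mul_le_Lp_mul_Lq μ hpq
    (f := fun ω => (H ω) ^ ((1:ℝ)/p)) (g := fun _ => 1) hHmeas aemeasurable_const
  simp only [Pi.mul_apply, mul_one, ENNReal.one_rpow, lintegral_const, measure_univ,
    one_mul] at key
  have h2 : ∀ ω, ((fun ω => (H ω) ^ ((1:ℝ)/p)) ω) ^ p = H ω := by
    intro ω
    rw [← ENNReal.rpow_mul]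
    rw [show (1:ℝ)/p * p = 1 by field_simp]
    exact ENNReal.rpow_one _
  have h3 : (∫⁻ a, ((fun ω => (H ω) ^ ((1:ℝ)/p)) a) ^ p ∂μ) = ∫⁻ a, H a ∂μ :=
    lintegral_congr h2
  rw [h3] at key
  simpa using key


set_option maxHeartbeats 1600000 in
theorem main_core {n m : ℕ} {ε δ p : ℝ} (hε : 0 < ε) (hε2 : ε < 1/2) (hδ0 : 0 ≤ δ) (hp : 2 ≤ p)
    (A : Matrix (Fin m) (Fin n) ℝ) (M : (Fin n → ℝ) → Measure (Fin m → ℝ))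
    (hprob : ∀ x, IsProbabilityMeasure (M x))
    (hdp : ∀ x x' : Fin n → ℝ, (∑ j, |x j - x' j|) ≤ 1 → ∀ S : Set (Fin m → ℝ), MeasurableSet S →
      M x S ≤ ENNReal.ofReal (Real.exp ε) * M x' S + ENNReal.ofReal δ)
    (hδt : 2 * Real.exp (2*ε) * (Real.exp (1/2) - 1) * δ / (Real.exp ε - 1) < 1)
    (htr : 0 < (sqrtM A).trace) :
    ∃ x : Fin n → ℝ,
      ENNReal.ofReal ((1 - 2 * Real.exp (2*ε) * (Real.exp (1/2) - 1) * δ / (Real.exp ε - 1))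
          * (m:ℝ) ^ ((1:ℝ)/p - 1/2) * (sqrtM A).trace
          / (16 * ε * Real.sqrt n))
        ≤ (∫⁻ y, ENNReal.ofReal (∑ i, |y i - A.mulVec x i| ^ p) ∂(M x)) ^ ((1:ℝ)/p) := by
  classical
  set S : Matrix (Fin n) (Fin n) ℝ := sqrtM A with hSdef
  set δt : ℝ := 2 * Real.exp (2*ε) * (Real.exp (1/2) - 1) * δ / (Real.exp ε - 1) with hδtdef
  have hδt0 : 0 ≤ δt := by
    rw [hδtdef]
    have h1 : (0:ℝ) < Real.exp ε - 1 := by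
      have h := Real.add_one_le_exp ε
      linarith
    have h2 : (0:ℝ) ≤ Real.exp (1/2) - 1 := by
      have : (1:ℝ) ≤ Real.exp (1/2) := Real.one_le_exp (by norm_num)
      linarith
    positivity
  -- diagonal of S is nonnegative
  have hS : S.PosSemidef := sqrtM_psd A
  have hdiag : ∀ i, 0 ≤ S i i := by
    intro i
    exact hS.diag_nonneg
  have htr' : 0 < ∑ i, S i i := by
    have : S.trace = ∑ i, S i i := by
      simp [Matrix.trace, Matrix.diag]
    rw [← this]
    exact htr
  -- n and m are positive
  have hn : 0 < n := by
    rcases Nat.eq_zero_or_pos n with hn0 | hnpos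
    · exfalso
      subst hn0
      simp at htr'
    · exact hnpos
  have hm : 0 < m := by
    rcases Nat.eq_zero_or_pos m with hm0 | hmpos
    swap
    · exact hmpos
    exfalso
    subst hm0
    -- then Aᴴ * A = 0, so S * S = 0, so S i i = 0 for all i
    have hSS : S * S = Aᴴ * A := sqrtM_mul_self A
    have hAA : Aᴴ * A = 0 := by
      ext i j
      simp [Matrix.mul_apply]
    have hdiag0 : ∀ i, S i i = 0 := by
      intro i
      have h1 : (S * S) i i = 0 := by rw [hSS, hAA]; simp
      have h2 : (S * S) i i = ∑ l, S i l * S l i := by simp [Matrix.mul_apply]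
      have hherm : ∀ l, S l i = S i l := by
        intro l
        have := hS.1
        calc S l i = Sᴴ i l := by simp [Matrix.conjTranspose_apply]
          _ = S i l := by rw [this]
      have h3 : ∑ l, S i l * S i l = 0 := by
        rw [← h1, h2]
        apply Finset.sum_congr rfl
        intro l _
        rw [hherm l]
      have h4 : S i i * S i i ≤ ∑ l, S i l * S i l := by
        apply Finset.single_le_sum (f := fun l => S i l * S i l)
        · intro l _
          exact mul_self_nonneg _
        · exact Finset.mem_univ i
      have h5 : S i i * S i i ≤ 0 := by rw [← h3]; exact h4
      have h6 : S i i * S i i = 0 := le_antisymm h5 (mul_self_nonneg _)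
      exact mul_self_eq_zero.mp h6
    have : ∑ i, S i i = 0 := by
      apply Finset.sum_eq_zero
      intro i _
      exact hdiag0 i
    rw [this] at htr'
    exact lt_irrefl _ htr'
  -- basic exp facts
  have hexpε1 : (0:ℝ) < Real.exp ε - 1 := by
    have h := Real.add_one_le_exp ε
    linarith
  have h1δt : (0:ℝ) < 1 - δt := by linarith
  -- the group privacy scale k
  set k : ℕ := ⌊1/(2*ε)⌋₊ with hkdef
  have hk1 : 1 ≤ k := by
    rw [hkdef, Nat.le_floor_iff (by positivity), Nat.cast_one, le_div_iff₀ (by positivity)]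
    linarith
  have hkle : (k:ℝ) ≤ 1/(2*ε) := Nat.floor_le (by positivity)
  have hkε : (k:ℝ) * ε ≤ 1/2 := by
    have h := mul_le_mul_of_nonneg_right hkle hε.le
    calc (k:ℝ) * ε ≤ 1/(2*ε) * ε := h
      _ = 1/2 := by field_simp
  have hklow : 1/(4*ε) ≤ (k:ℝ) := by
    have hhalf : 1/(4*ε) = (1/(2*ε))/2 := by
      field_simp
      ring
    rcases lt_or_ge (1/(2*ε)) 2 with h | h
    · have h1 : 1/(4*ε) < 1 := by rw [hhalf]; linarith
      have h2 : (1:ℝ) ≤ (k:ℝ) := by exact_mod_cast hk1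
      linarith
    · have h2 : 1/(2*ε) - 1 < (k:ℝ) := Nat.sub_one_lt_floor _
      have h3 : (1:ℝ) ≤ 1/(4*ε) := by rw [hhalf]; linarith
      have h4 : 1/(2*ε) - 1/(4*ε) = 1/(4*ε) := by
        field_simp
        ring
      linarith
  set Ek : ℝ := Real.exp (k * ε) with hEkdef
  set Dk : ℝ := δ * ∑ j ∈ Finset.range k, Real.exp (j * ε) with hDkdef
  have hEk1 : 1 ≤ Ek := Real.one_le_exp (by positivity)
  have hEk0 : (0:ℝ) < Ek := lt_of_lt_of_le one_pos hEk1
  have hEkhalf : Ek ≤ Real.exp (1/2) := Real.exp_le_exp.mpr hkε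
  have hexphalf : Real.exp (1/2 : ℝ) ≤ 2 := by
    have hsq : Real.exp (1/2 : ℝ) * Real.exp (1/2 : ℝ) = Real.exp 1 := by
      rw [← Real.exp_add]
      norm_num
    nlinarith [Real.exp_one_lt_d9, Real.exp_pos (1/2 : ℝ)]
  have hEk2 : Ek ≤ 2 := hEkhalf.trans hexphalf
  have hDk0 : 0 ≤ Dk := by
    rw [hDkdef]
    apply mul_nonneg hδ0
    exact Finset.sum_nonneg fun j _ => (Real.exp_pos _).le
  have hDkδt : Dk ≤ δt := by
    have hne : Real.exp ε ≠ 1 := by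
      intro hcon
      rw [hcon] at hexpε1
      simp at hexpε1
    have hgeom : ∑ j ∈ Finset.range k, Real.exp (j * ε) = (Ek - 1)/(Real.exp ε - 1) := by
      calc ∑ j ∈ Finset.range k, Real.exp (j*ε)
          = ∑ j ∈ Finset.range k, (Real.exp ε)^j := by
            apply Finset.sum_congr rfl
            intro j _
            rw [← Real.exp_nat_mul]
        _ = ((Real.exp ε)^k - 1)/(Real.exp ε - 1) := geom_sum_eq hne k
        _ = (Ek - 1)/(Real.exp ε - 1) := by rw [hEkdef, Real.exp_nat_mul]
    have hstep1 : Dk ≤ δ * (Real.exp (1/2 : ℝ) - 1)/(Real.exp ε - 1) := by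
      rw [hDkdef, hgeom, mul_div_assoc']
      rw [div_le_div_iff₀ hexpε1 hexpε1]
      have hEkm1 : Ek - 1 ≤ Real.exp (1/2 : ℝ) - 1 := by linarith
      have hmul := mul_le_mul_of_nonneg_left hEkm1 (mul_nonneg hδ0 hexpε1.le)
      nlinarith [hmul]
    have hfac : (1:ℝ) ≤ 2*Real.exp (2*ε) := by
      nlinarith [Real.one_le_exp (by positivity : (0:ℝ) ≤ 2*ε)]
    have hδteq : δt = (2*Real.exp (2*ε)) * (δ * (Real.exp (1/2 : ℝ) - 1)/(Real.exp ε - 1)) := by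
      rw [hδtdef]
      ring
    have hnn : 0 ≤ δ * (Real.exp (1/2 : ℝ) - 1)/(Real.exp ε - 1) := by
      apply div_nonneg _ hexpε1.le
      apply mul_nonneg hδ0
      have := Real.one_le_exp (by norm_num : (0:ℝ) ≤ 1/2)
      linarith
    calc Dk ≤ δ * (Real.exp (1/2 : ℝ) - 1)/(Real.exp ε - 1) := hstep1
      _ ≤ (2*Real.exp (2*ε)) * (δ * (Real.exp (1/2 : ℝ) - 1)/(Real.exp ε - 1)) :=
          le_mul_of_one_le_left hnn hfac
      _ = δt := hδteq.symm
  have hDk1 : Dk ≤ 1 := hDkδt.trans hδt.le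
  have h1Dk : (0:ℝ) ≤ 1 - Dk := by linarith
  have h1δtDk : 1 - δt ≤ 1 - Dk := by linarith
  -- the partial isometry Q
  obtain ⟨Q, hQ1, hQ2⟩ := exists_Q A
  -- the inputs
  set X : (Fin n → Bool) → (Fin n → ℝ) := fun z j => if z j then (k:ℝ)/2 else -((k:ℝ)/2)
    with hXdef
  have hmeasF : ∀ i : Fin n, Measurable (fun y : Fin m → ℝ => (Qᵀ *ᵥ y) i) := by
    intro i
    have heq : (fun y : Fin m → ℝ => (Qᵀ *ᵥ y) i) = fun y => ∑ j, Qᵀ i j * y j := by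
      funext y
      simp [Matrix.mulVec, dotProduct]
    rw [heq]
    exact Finset.measurable_sum _ fun j _ => (measurable_pi_apply j).const_mul _
  set TermI : Fin n → (Fin n → Bool) → ℝ≥0∞ :=
    fun i z => ∫⁻ y, ENNReal.ofReal |(Qᵀ *ᵥ y) i - (S *ᵥ X z) i| ∂(M (X z)) with hTdef
  have keyPair : ∀ (i : Fin n) (z : Fin n → Bool), z i = true →
      ENNReal.ofReal ((k:ℝ) * S i i * (1 - Dk) / Ek)
        ≤ TermI i z + TermI i (Function.update z i false) := by
    intro i z hzi
    set z' := Function.update z i false with hz'def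
    have hXzi : X z i = (k:ℝ)/2 := by rw [hXdef]; simp [hzi]
    have hXz'i : X z' i = -((k:ℝ)/2) := by
      rw [hXdef]
      simp [hz'def]
    have hXoff : ∀ j, j ≠ i → X z j = X z' j := by
      intro j hj
      rw [hXdef]
      simp [hz'def, Function.update_of_ne hj]
    have hXup1 : Function.update (X z) i ((k:ℝ)/2) = X z := by
      funext j
      rcases eq_or_ne j i with rfl | hj
      · rw [Function.update_self, hXzi]
      · rw [Function.update_of_ne hj]
    have hXup2 : Function.update (X z) i ((k:ℝ)/2 - (k:ℕ)) = X z' := by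
      funext j
      rcases eq_or_ne j i with rfl | hj
      · rw [Function.update_self, hXz'i]
        push_cast
        ring
      · rw [Function.update_of_ne hj]
        exact hXoff j hj
    have hgp : ∀ Sset : Set (Fin m → ℝ), MeasurableSet Sset →
        M (X z) Sset ≤ ENNReal.ofReal Ek * M (X z') Sset + ENNReal.ofReal Dk := by
      intro Sset hSset
      have h := chain_bound hδ0 hdp (X z) i ((k:ℝ)/2) k Sset hSset
      rwa [hXup1, hXup2] at h
    have hdiff : (S *ᵥ X z) i - (S *ᵥ X z') i = (k:ℝ) * S i i := by
      have h1 : (S *ᵥ X z) i - (S *ᵥ X z') i = ∑ j, S i j * (X z j - X z' j) := by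
        simp [Matrix.mulVec, dotProduct, mul_sub, Finset.sum_sub_distrib]
      rw [h1, Finset.sum_eq_single i]
      · rw [hXzi, hXz'i]
        ring
      · intro j _ hj
        rw [hXoff j hj]
        ring
      · intro hmem
        exact absurd (Finset.mem_univ i) hmem
    have hs0 : (0:ℝ) ≤ (k:ℝ)/2 * S i i := mul_nonneg (by positivity) (hdiag i)
    haveI := hprob (X z)
    have hpb := pair_bound (M (X z)) (M (X z')) hEk1 hDk0 hDk1 hgp (hmeasF i)
      ((S *ᵥ X z) i - (k:ℝ)/2 * S i i) hs0
    have hcp : (S *ᵥ X z) i - (k:ℝ)/2 * S i i + (k:ℝ)/2 * S i i = (S *ᵥ X z) i := by ring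
    have hcm : (S *ᵥ X z) i - (k:ℝ)/2 * S i i - (k:ℝ)/2 * S i i = (S *ᵥ X z') i := by
      linarith [hdiff]
    rw [hcp, hcm] at hpb
    have h2s : 2 * ((k:ℝ)/2 * S i i) * (1-Dk)/Ek = (k:ℝ) * S i i * (1-Dk)/Ek := by ring
    rw [h2s] at hpb
    exact hpb
  -- summation over z and pigeonhole
  set L : (Fin n → Bool) → ℝ≥0∞ := fun z => ∑ i, TermI i z with hLdef
  have hcard_sub : ∀ i : Fin n, Fintype.card ({j : Fin n // j ≠ i} → Bool) = 2^(n-1) := by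
    intro i
    rw [Fintype.card_fun, Fintype.card_bool]
    congr 1
    have h1 : Fintype.card {j : Fin n // j ≠ i} = n - 1 := by
      have h2 := Fintype.card_subtype_compl (fun j : Fin n => j = i)
      simp only [Fintype.card_subtype_eq, Fintype.card_fin] at h2
      exact h2
    rw [h1]
  have hsumz : ∀ i : Fin n,
      ((2^(n-1) : ℕ) : ℝ≥0∞) * ENNReal.ofReal ((k:ℝ) * S i i * (1-Dk)/Ek)
        ≤ ∑ z : Fin n → Bool, TermI i z := by
    intro i
    have hsum1 : ∑ z : Fin n → Bool, TermI i z
        = ∑ pr : Bool × ({j : Fin n // j ≠ i} → Bool), TermI i ((Equiv.funSplitAt i Bool).symm pr) :=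
      (Equiv.sum_comp (Equiv.funSplitAt i Bool).symm (TermI i)).symm
    rw [hsum1, Fintype.sum_prod_type, Fintype.sum_bool, ← Finset.sum_add_distrib]
    have hpt : ∀ t : {j : Fin n // j ≠ i} → Bool,
        ENNReal.ofReal ((k:ℝ) * S i i * (1-Dk)/Ek)
          ≤ TermI i ((Equiv.funSplitAt i Bool).symm (true, t))
            + TermI i ((Equiv.funSplitAt i Bool).symm (false, t)) := by
      intro t
      have h1 : ((Equiv.funSplitAt i Bool).symm (true, t)) i = true := by
        rw [Equiv.funSplitAt_symm_apply]
        simp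
      have h2 : (Equiv.funSplitAt i Bool).symm (false, t)
          = Function.update ((Equiv.funSplitAt i Bool).symm (true, t)) i false := by
        funext j
        rcases eq_or_ne j i with rfl | hj
        · rw [Function.update_self, Equiv.funSplitAt_symm_apply]
          simp
        · rw [Function.update_of_ne hj, Equiv.funSplitAt_symm_apply,
            Equiv.funSplitAt_symm_apply]
          simp [hj]
      rw [h2]
      exact keyPair i _ h1
    calc ((2^(n-1) : ℕ) : ℝ≥0∞) * ENNReal.ofReal ((k:ℝ) * S i i * (1-Dk)/Ek)
        = ∑ _t : {j : Fin n // j ≠ i} → Bool, ENNReal.ofReal ((k:ℝ) * S i i * (1-Dk)/Ek) := by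
          rw [Finset.sum_const, Finset.card_univ, hcard_sub i, nsmul_eq_mul]
      _ ≤ _ := Finset.sum_le_sum fun t _ => hpt t
  have htotal : ((2^(n-1) : ℕ) : ℝ≥0∞)
      * ENNReal.ofReal ((k:ℝ) * (∑ i, S i i) * (1-Dk)/Ek)
      ≤ ∑ z : Fin n → Bool, L z := by
    have h1 : ∑ z : Fin n → Bool, L z = ∑ i : Fin n, ∑ z : Fin n → Bool, TermI i z :=
      Finset.sum_comm
    have h2 : ENNReal.ofReal ((k:ℝ) * (∑ i, S i i) * (1-Dk)/Ek)
        = ∑ i, ENNReal.ofReal ((k:ℝ) * S i i * (1-Dk)/Ek) := by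
      have hterm : ∀ i : Fin n, (k:ℝ) * S i i * (1-Dk)/Ek = S i i * ((k:ℝ) * (1-Dk)/Ek) := by
        intro i
        ring
      have hterm2 : (k:ℝ) * (∑ i, S i i) * (1-Dk)/Ek = ∑ i, (k:ℝ) * S i i * (1-Dk)/Ek := by
        rw [Finset.sum_congr rfl fun i _ => hterm i, ← Finset.sum_mul]
        ring
      rw [hterm2, ENNReal.ofReal_sum_of_nonneg]
      intro i _
      apply div_nonneg _ hEk0.le
      apply mul_nonneg (mul_nonneg (by positivity) (hdiag i)) h1Dk
    rw [h1, h2, Finset.mul_sum]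
    exact Finset.sum_le_sum fun i _ => hsumz i
  obtain ⟨zs, _, hzmax⟩ := Finset.exists_max_image (Finset.univ : Finset (Fin n → Bool)) L
    ⟨fun _ => true, Finset.mem_univ _⟩
  have hLsum_le : ∑ z : Fin n → Bool, L z ≤ ((2^n : ℕ) : ℝ≥0∞) * L zs := by
    calc ∑ z : Fin n → Bool, L z ≤ ∑ _z : Fin n → Bool, L zs :=
          Finset.sum_le_sum fun z _ => hzmax z (Finset.mem_univ z)
      _ = ((Fintype.card (Fin n → Bool) : ℕ) : ℝ≥0∞) * L zs := by
          rw [Finset.sum_const, Finset.card_univ, nsmul_eq_mul]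
      _ = ((2^n : ℕ) : ℝ≥0∞) * L zs := by
          rw [Fintype.card_fun, Fintype.card_bool, Fintype.card_fin]
  have hLz : ENNReal.ofReal ((k:ℝ) * (∑ i, S i i) * (1-Dk)/Ek / 2) ≤ L zs := by
    have h2n : (2^n : ℕ) = 2^(n-1) * 2 := by
      rw [← pow_succ]
      congr 1
      omega
    have hchain : ((2^(n-1) : ℕ) : ℝ≥0∞) * ENNReal.ofReal ((k:ℝ) * (∑ i, S i i) * (1-Dk)/Ek)
        ≤ ((2^(n-1) : ℕ) : ℝ≥0∞) * (2 * L zs) := by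
      calc ((2^(n-1) : ℕ) : ℝ≥0∞) * ENNReal.ofReal ((k:ℝ) * (∑ i, S i i) * (1-Dk)/Ek)
          ≤ ∑ z : Fin n → Bool, L z := htotal
        _ ≤ ((2^n : ℕ) : ℝ≥0∞) * L zs := hLsum_le
        _ = ((2^(n-1) : ℕ) : ℝ≥0∞) * (2 * L zs) := by
            rw [h2n]
            push_cast
            ring
    have hne1 : ((2^(n-1) : ℕ) : ℝ≥0∞) ≠ 0 := by
      simp
    have hne2 : ((2^(n-1) : ℕ) : ℝ≥0∞) ≠ ⊤ := by
      exact ENNReal.natCast_ne_top _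
    have hmid := (ENNReal.mul_le_mul_iff_right hne1 hne2).mp hchain
    have hsplit2 : ENNReal.ofReal ((k:ℝ) * (∑ i, S i i) * (1-Dk)/Ek)
        = 2 * ENNReal.ofReal ((k:ℝ) * (∑ i, S i i) * (1-Dk)/Ek / 2) := by
      rw [show ((2:ℝ≥0∞)) = ENNReal.ofReal (2:ℝ) by simp,
        ← ENNReal.ofReal_mul (by norm_num : (0:ℝ) ≤ 2)]
      congr 1
      ring
    rw [hsplit2] at hmid
    exact (ENNReal.mul_le_mul_iff_right (by norm_num) ENNReal.ofNat_ne_top).mp hmid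
  -- aggregation at the maximizing z
  have hGmeas : Measurable (fun y : Fin m → ℝ => ∑ i', |y i' - (A *ᵥ X zs) i'| ^ p) := by
    apply Finset.measurable_sum
    intro i' _
    have hc : Continuous (fun t : ℝ => t ^ p) := Real.continuous_rpow_const (by linarith)
    exact hc.measurable.comp ((measurable_pi_apply i').sub_const _).abs
  have hG0 : ∀ y : Fin m → ℝ, 0 ≤ ∑ i', |y i' - (A *ᵥ X zs) i'| ^ p := fun y =>
    Finset.sum_nonneg fun i' _ => Real.rpow_nonneg (abs_nonneg _) _
  have hc₁0 : (0:ℝ) < Real.sqrt n * (m:ℝ) ^ ((1:ℝ)/2 - 1/p) := by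
    apply mul_pos (Real.sqrt_pos.mpr (by exact_mod_cast hn))
    apply Real.rpow_pos_of_pos
    exact_mod_cast hm
  have hptwise : ∀ y : Fin m → ℝ,
      ∑ i, |(Qᵀ *ᵥ y) i - (S *ᵥ X zs) i|
        ≤ Real.sqrt n * (m:ℝ) ^ ((1:ℝ)/2 - 1/p)
          * (∑ i', |y i' - (A *ᵥ X zs) i'| ^ p) ^ ((1:ℝ)/p) := by
    intro y
    have hv : ∀ i, (Qᵀ *ᵥ y) i - (S *ᵥ X zs) i = (Qᵀ *ᵥ (y - A *ᵥ X zs)) i := by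
      intro i
      rw [Matrix.mulVec_sub]
      have hQS : Qᵀ *ᵥ (A *ᵥ X zs) = S *ᵥ X zs := by
        rw [Matrix.mulVec_mulVec, hQ1]
      rw [hQS]
      simp
    have hkey := sum_abs_le hp (fun i => (Qᵀ *ᵥ (y - A *ᵥ X zs)) i)
      (fun j => (y - A *ᵥ X zs) j) (hQ2 _)
    have hw : ∀ j, |(y - A *ᵥ X zs) j| = |y j - (A *ᵥ X zs) j| := by
      intro j
      simp
    calc ∑ i, |(Qᵀ *ᵥ y) i - (S *ᵥ X zs) i|
        = ∑ i, |(Qᵀ *ᵥ (y - A *ᵥ X zs)) i| :=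
          Finset.sum_congr rfl fun i _ => by rw [hv]
      _ ≤ Real.sqrt n * (m:ℝ) ^ ((1:ℝ)/2 - 1/p)
          * (∑ j, |(y - A *ᵥ X zs) j| ^ p) ^ ((1:ℝ)/p) := hkey
      _ = _ := by
          rw [Finset.sum_congr rfl fun j _ => by rw [hw]]
  haveI := hprob (X zs)
  have hL_int : L zs = ∫⁻ y, ENNReal.ofReal (∑ i, |(Qᵀ *ᵥ y) i - (S *ᵥ X zs) i|)
      ∂(M (X zs)) := by
    simp only [hLdef, hTdef]
    calc ∑ i, ∫⁻ y, ENNReal.ofReal |(Qᵀ *ᵥ y) i - (S *ᵥ X zs) i| ∂(M (X zs))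
        = ∫⁻ y, ∑ i, ENNReal.ofReal |(Qᵀ *ᵥ y) i - (S *ᵥ X zs) i| ∂(M (X zs)) :=
          (lintegral_finset_sum _ fun i _ =>
            ((hmeasF i).sub_const _).abs.ennreal_ofReal).symm
      _ = _ := lintegral_congr fun y =>
          (ENNReal.ofReal_sum_of_nonneg fun i _ => abs_nonneg _).symm
  have hLz_le : L zs ≤ ENNReal.ofReal (Real.sqrt n * (m:ℝ) ^ ((1:ℝ)/2 - 1/p))
      * (∫⁻ y, ENNReal.ofReal (∑ i', |y i' - (A *ᵥ X zs) i'| ^ p) ∂(M (X zs))) ^ ((1:ℝ)/p) := by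
    rw [hL_int]
    have hGm2 : Measurable fun y : Fin m → ℝ =>
        ENNReal.ofReal ((∑ i', |y i' - (A *ᵥ X zs) i'| ^ p) ^ ((1:ℝ)/p)) := by
      apply Measurable.ennreal_ofReal
      have hc : Continuous (fun t : ℝ => t ^ ((1:ℝ)/p)) :=
        Real.continuous_rpow_const (by positivity)
      exact hc.measurable.comp hGmeas
    calc ∫⁻ y, ENNReal.ofReal (∑ i, |(Qᵀ *ᵥ y) i - (S *ᵥ X zs) i|) ∂(M (X zs))
        ≤ ∫⁻ y, ENNReal.ofReal (Real.sqrt n * (m:ℝ) ^ ((1:ℝ)/2 - 1/p)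
            * (∑ i', |y i' - (A *ᵥ X zs) i'| ^ p) ^ ((1:ℝ)/p)) ∂(M (X zs)) :=
          lintegral_mono fun y => ENNReal.ofReal_le_ofReal (hptwise y)
      _ = ENNReal.ofReal (Real.sqrt n * (m:ℝ) ^ ((1:ℝ)/2 - 1/p))
          * ∫⁻ y, ENNReal.ofReal ((∑ i', |y i' - (A *ᵥ X zs) i'| ^ p) ^ ((1:ℝ)/p))
            ∂(M (X zs)) := by
          rw [← lintegral_const_mul _ hGm2]
          exact lintegral_congr fun y => ENNReal.ofReal_mul hc₁0.le
      _ ≤ ENNReal.ofReal (Real.sqrt n * (m:ℝ) ^ ((1:ℝ)/2 - 1/p))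
          * (∫⁻ y, ENNReal.ofReal (∑ i', |y i' - (A *ᵥ X zs) i'| ^ p)
              ∂(M (X zs))) ^ ((1:ℝ)/p) := by
          gcongr
          have heq : ∀ y : Fin m → ℝ,
              ENNReal.ofReal ((∑ i', |y i' - (A *ᵥ X zs) i'| ^ p) ^ ((1:ℝ)/p))
                = (ENNReal.ofReal (∑ i', |y i' - (A *ᵥ X zs) i'| ^ p)) ^ ((1:ℝ)/p) := fun y =>
            (ENNReal.ofReal_rpow_of_nonneg (hG0 y) (by positivity)).symm
          rw [lintegral_congr heq]
          exact lintegral_rpow_le (M (X zs)) hp (hGmeas.ennreal_ofReal.aemeasurable)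
  -- final arithmetic and assembly
  refine ⟨X zs, ?_⟩
  have htrace : S.trace = ∑ i, S i i := by simp [Matrix.trace, Matrix.diag]
  have hsqn0 : (0:ℝ) < Real.sqrt n := Real.sqrt_pos.mpr (by exact_mod_cast hn)
  have hmpow : (m:ℝ) ^ ((1:ℝ)/p - 1/2) * (m:ℝ) ^ ((1:ℝ)/2 - 1/p) = 1 := by
    rw [← Real.rpow_add (by exact_mod_cast hm : (0:ℝ) < m)]
    norm_num
  have harith : (1 - δt) * (m:ℝ) ^ ((1:ℝ)/p - 1/2) * S.trace / (16*ε*Real.sqrt n)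
      * (Real.sqrt n * (m:ℝ) ^ ((1:ℝ)/2 - 1/p))
      ≤ (k:ℝ) * (∑ i, S i i) * (1-Dk)/Ek / 2 := by
    have heq1 : (1 - δt) * (m:ℝ) ^ ((1:ℝ)/p - 1/2) * S.trace / (16*ε*Real.sqrt n)
        * (Real.sqrt n * (m:ℝ) ^ ((1:ℝ)/2 - 1/p))
        = (1 - δt) * S.trace * ((m:ℝ) ^ ((1:ℝ)/p - 1/2) * (m:ℝ) ^ ((1:ℝ)/2 - 1/p))
          * (Real.sqrt n / Real.sqrt n) / (16*ε) := by
      ring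
    have heq2 : (k:ℝ) * (∑ i, S i i) * (1-Dk)/Ek / 2
        = (k:ℝ) * (∑ i, S i i) * (1-Dk) / (2*Ek) := by
      rw [div_div]
      ring_nf
    rw [heq1, hmpow, div_self hsqn0.ne', mul_one, mul_one, htrace, heq2]
    rw [div_le_div_iff₀ (by positivity) (by positivity)]
    have hT0 : (0:ℝ) ≤ ∑ i, S i i := htr'.le
    have h16k : (4:ℝ) ≤ 16*ε*(k:ℝ) := by
      have h := mul_le_mul_of_nonneg_left hklow (by positivity : (0:ℝ) ≤ 16*ε)
      calc (4:ℝ) = 16*ε*(1/(4*ε)) := by field_simp; ring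
        _ ≤ 16*ε*(k:ℝ) := h
    have hA1 : (1-δt)*(∑ i, S i i)*(2*Ek) ≤ (1-δt)*(∑ i, S i i)*4 := by
      apply mul_le_mul_of_nonneg_left (by linarith)
      exact mul_nonneg h1δt.le hT0
    have hA2 : (1-δt)*(∑ i, S i i)*4 ≤ (1-δt)*(∑ i, S i i)*(16*ε*(k:ℝ)) := by
      apply mul_le_mul_of_nonneg_left h16k
      exact mul_nonneg h1δt.le hT0
    have hA3 : (1-δt)*((∑ i, S i i)*(16*ε*(k:ℝ)))
        ≤ (1-Dk)*((∑ i, S i i)*(16*ε*(k:ℝ))) := by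
      apply mul_le_mul_of_nonneg_right h1δtDk
      positivity
    nlinarith [hA1, hA2, hA3]
  have hofR : ENNReal.ofReal (Real.sqrt n * (m:ℝ) ^ ((1:ℝ)/2 - 1/p))
      * ENNReal.ofReal ((1 - δt) * (m:ℝ) ^ ((1:ℝ)/p - 1/2) * S.trace / (16*ε*Real.sqrt n))
      ≤ ENNReal.ofReal (Real.sqrt n * (m:ℝ) ^ ((1:ℝ)/2 - 1/p))
        * (∫⁻ y, ENNReal.ofReal (∑ i', |y i' - (A *ᵥ X zs) i'| ^ p)
            ∂(M (X zs))) ^ ((1:ℝ)/p) := by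
    calc ENNReal.ofReal (Real.sqrt n * (m:ℝ) ^ ((1:ℝ)/2 - 1/p))
          * ENNReal.ofReal ((1 - δt) * (m:ℝ) ^ ((1:ℝ)/p - 1/2) * S.trace / (16*ε*Real.sqrt n))
        = ENNReal.ofReal ((1 - δt) * (m:ℝ) ^ ((1:ℝ)/p - 1/2) * S.trace / (16*ε*Real.sqrt n)
            * (Real.sqrt n * (m:ℝ) ^ ((1:ℝ)/2 - 1/p))) := by
          rw [← ENNReal.ofReal_mul hc₁0.le]
          congr 1
          ring
      _ ≤ ENNReal.ofReal ((k:ℝ) * (∑ i, S i i) * (1-Dk)/Ek / 2) :=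
          ENNReal.ofReal_le_ofReal harith
      _ ≤ L zs := hLz
      _ ≤ _ := hLz_le
  have hcne : ENNReal.ofReal (Real.sqrt n * (m:ℝ) ^ ((1:ℝ)/2 - 1/p)) ≠ 0 := by
    rw [Ne, ENNReal.ofReal_eq_zero, not_le]
    exact hc₁0
  exact (ENNReal.mul_le_mul_iff_right hcne ENNReal.ofReal_ne_top).mp hofR


lemma psd_diag_nonneg {n : ℕ} {S : Matrix (Fin n) (Fin n) ℝ} (hS : S.PosSemidef) :
    ∀ i, 0 ≤ S i i := by
  intro i
  exact hS.diag_nonneg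

lemma schatten1_nonneg {n m : ℕ} (A : Matrix (Fin m) (Fin n) ℝ) :
    0 ≤ (sqrtM A).trace := by
  have hd := psd_diag_nonneg (sqrtM_psd A)
  have : (sqrtM A).trace
      = ∑ i, (sqrtM A) i i := by
    simp [Matrix.trace, Matrix.diag]
  rw [this]
  exact Finset.sum_nonneg fun i _ => hd i

end DPAux

/-- lower bound for general (ε,δ)-DP mechanisms in terms of the Schatten-1 norm. -/
theorem schatten_lower_bound_DP :
    ∃ C : ℝ, 0 < C ∧
      ∀ (n m : ℕ) (ε δ p : ℝ), 0 < ε → ε < 1 / 2 → 0 ≤ δ → δ ≤ 1 → 2 ≤ p →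
        ∀ (A : Matrix (Fin m) (Fin n) ℝ) (M : (Fin n → ℝ) → Measure (Fin m → ℝ)),
          (∀ x, IsProbabilityMeasure (M x)) → IsDP M ε δ →
          errLp M A p ≥ ENNReal.ofReal
            ((1 - 2 * Real.exp (2 * ε) * (Real.exp (1 / 2) - 1) * δ / (Real.exp ε - 1))
              * (m : ℝ) ^ ((1 : ℝ) / p - 1 / 2) * schatten1 A / (C * ε * Real.sqrt n)) := by
  refine ⟨16, by norm_num, ?_⟩
  intro n m ε δ p hε hε2 hδ0 hδ1 hp A M hprob hdp
  rw [ge_iff_le]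
  have hmr : (0:ℝ) ≤ (m:ℝ) ^ ((1:ℝ)/p - 1/2) := Real.rpow_nonneg (Nat.cast_nonneg m) _
  have hs1 : (0:ℝ) ≤ schatten1 A := DPAux.schatten1_nonneg A
  by_cases hδtlt : 2 * Real.exp (2 * ε) * (Real.exp (1 / 2) - 1) * δ / (Real.exp ε - 1) < 1
  · by_cases htr : 0 < schatten1 A
    · obtain ⟨x, hx⟩ := DPAux.main_core hε hε2 hδ0 hp A M hprob hdp hδtlt htr
      exact le_iSup_of_le x hx
    · push_neg at htr
      have hnum : (1 - 2 * Real.exp (2 * ε) * (Real.exp (1 / 2) - 1) * δ / (Real.exp ε - 1))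
          * (m : ℝ) ^ ((1 : ℝ) / p - 1 / 2) * schatten1 A / (16 * ε * Real.sqrt n) ≤ 0 := by
        rw [div_nonpos_iff]
        right
        constructor
        · have h1 : (0:ℝ) ≤ (1 - 2 * Real.exp (2 * ε) * (Real.exp (1 / 2) - 1) * δ
              / (Real.exp ε - 1)) := by linarith
          have h2 := mul_nonneg h1 hmr
          have h3 : schatten1 A = 0 := le_antisymm htr hs1
          rw [h3]
          simp
        · positivity
      rw [ENNReal.ofReal_of_nonpos hnum]
      exact zero_le
  · push_neg at hδtlt
    have hnum : (1 - 2 * Real.exp (2 * ε) * (Real.exp (1 / 2) - 1) * δ / (Real.exp ε - 1))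
        * (m : ℝ) ^ ((1 : ℝ) / p - 1 / 2) * schatten1 A / (16 * ε * Real.sqrt n) ≤ 0 := by
      rw [div_nonpos_iff]
      right
      constructor
      · have h1 : 1 - 2 * Real.exp (2 * ε) * (Real.exp (1 / 2) - 1) * δ
            / (Real.exp ε - 1) ≤ 0 := by linarith
        have h2 := mul_nonneg hmr hs1
        nlinarith
      · positivity
    rw [ENNReal.ofReal_of_nonpos hnum]
    exact zero_le
end
end

section
/- Let d ≥ 0 and let H_d be the 2^d × 2^d Hadamard matrix. Let Q ∈ ℝ^{ℓ × 2^d} be any matrix formed by selecting ℓ ≥ 1 distinct rows of H_d. Then κ(Q) ≥ 2. In particular, the parity query matrix Q_{d,w} satisfies κ(Q_{d,w}) ≥ 2. -/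
open MeasureTheory Matrix
open scoped ENNReal

noncomputable section

open DPPaper

namespace DPPaperAux

open DPPaper

/-- Key lemma: a matrix with pairwise-orthogonal rows each of squared `ℓ₂` norm equal
to the number of columns has `κ ≥ 2`. -/
lemma kappa_ge_two_of_orth {K N : Type*} [Fintype K] [Nonempty K] [DecidableEq K]
    [Fintype N] [DecidableEq N]
    (A : Matrix K N ℝ) (hn : 0 < Fintype.card N)
    (horth : ∀ i i' : K, ∑ j, A i j * A i' j
      = if i = i' then (Fintype.card N : ℝ) else 0) :
    (2:ℝ) ≤ kappa A := by
  simp only [kappa, width, sensPolytope]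
  have hNne : Nonempty N := Fintype.card_pos_iff.mp hn
  obtain ⟨i₀⟩ := (inferInstance : Nonempty K)
  apply le_csInf
  · refine ⟨_, fun i => if i = i₀ then 1 else 0, ?_, rfl⟩
    simp [ite_pow, Finset.sum_ite_eq']
  rintro c ⟨θ, hθ, rfl⟩
  set g : N → ℝ := fun j => ∑ i, θ i * A i j with hg
  have hsum : ∑ j, g j ^ 2 = (Fintype.card N : ℝ) := by
    have h1 : ∀ j, g j ^ 2 = ∑ i, ∑ i', (θ i * θ i') * (A i j * A i' j) := by
      intro j
      simp only [hg, sq, Finset.sum_mul_sum]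
      exact Finset.sum_congr rfl fun i _ => Finset.sum_congr rfl fun i' _ => by ring
    calc ∑ j, g j ^ 2 = ∑ j, ∑ i, ∑ i', (θ i * θ i') * (A i j * A i' j) := by
          simp only [h1]
      _ = ∑ i, ∑ i', (θ i * θ i') * ∑ j, A i j * A i' j := by
          rw [Finset.sum_comm]
          refine Finset.sum_congr rfl fun i _ => ?_
          rw [Finset.sum_comm]
          exact Finset.sum_congr rfl fun i' _ => (Finset.mul_sum _ _ _).symm
      _ = ∑ i, θ i ^ 2 * (Fintype.card N : ℝ) := by
          refine Finset.sum_congr rfl fun i _ => ?_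
          simp only [horth, mul_ite, mul_zero, Finset.sum_ite_eq, Finset.mem_univ, if_true]
          ring
      _ = (Fintype.card N : ℝ) := by rw [← Finset.sum_mul, hθ, one_mul]
  have hex : ∃ j₀ : N, 1 ≤ |g j₀| := by
    by_contra h
    push_neg at h
    have hlt : ∑ j, g j ^ 2 < ∑ _j : N, (1:ℝ) :=
      Finset.sum_lt_sum_of_nonempty Finset.univ_nonempty
        (fun j _ => by have := h j; nlinarith [abs_nonneg (g j), sq_abs (g j)])
    rw [hsum] at hlt
    simp at hlt
  obtain ⟨j₀, hj₀⟩ := hex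
  have hfx : ∀ x : N → ℝ, (∑ i, θ i * A.mulVec x i) = ∑ j, g j * x j := by
    intro x
    simp only [Matrix.mulVec, dotProduct, Finset.mul_sum]
    rw [Finset.sum_comm]
    refine Finset.sum_congr rfl fun j _ => ?_
    rw [Finset.sum_mul]
    exact Finset.sum_congr rfl fun i _ => by ring
  set T : Set ℝ := (fun v => ∑ i, θ i * v i) ''
    {v | ∃ x : N → ℝ, (∑ i, |x i|) ≤ 1 ∧ v = A.mulVec x} with hT
  have hbound : ∀ c ∈ T, |c| ≤ ∑ j, |g j| := by
    rintro c ⟨v, ⟨x, hx1, rfl⟩, rfl⟩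
    dsimp only
    rw [hfx]
    calc |∑ j, g j * x j| ≤ ∑ j, |g j * x j| := Finset.abs_sum_le_sum_abs _ _
      _ ≤ ∑ j, |g j| := by
          refine Finset.sum_le_sum fun j _ => ?_
          rw [abs_mul]
          have hxj : |x j| ≤ 1 :=
            le_trans (Finset.single_le_sum (fun i _ => abs_nonneg (x i)) (Finset.mem_univ j)) hx1
          nlinarith [abs_nonneg (g j)]
  have hbdd : BddAbove T := ⟨∑ j, |g j|, fun c hc => (abs_le.mp (hbound c hc)).2⟩
  have hbdd' : BddBelow T := ⟨-∑ j, |g j|, fun c hc => (abs_le.mp (hbound c hc)).1⟩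
  have hmem : ∀ s : ℝ, s = 1 ∨ s = -1 → s * g j₀ ∈ T := by
    rintro s hs
    refine ⟨_, ⟨fun j => if j = j₀ then s else 0, ?_, rfl⟩, ?_⟩
    · rcases hs with rfl | rfl <;> simp [apply_ite, Finset.sum_ite_eq']
    · dsimp only
      rw [hfx]
      simp [Finset.sum_ite_eq', mul_comm]
  have hmem1 : g j₀ ∈ T := by simpa using hmem 1 (Or.inl rfl)
  have hmem2 : -g j₀ ∈ T := by simpa using hmem (-1) (Or.inr rfl)
  have h1 : g j₀ ≤ sSup T := le_csSup hbdd hmem1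
  have h2 : -g j₀ ≤ sSup T := le_csSup hbdd hmem2
  have h3 : sInf T ≤ g j₀ := csInf_le hbdd' hmem1
  have h4 : sInf T ≤ -g j₀ := csInf_le hbdd' hmem2
  rcases abs_cases (g j₀) with ⟨habs, _⟩ | ⟨habs, _⟩ <;> rw [habs] at hj₀ <;> linarith

set_option linter.unnecessarySeqFocus false in
/-- Orthogonality of the rows of the Hadamard matrix. -/
lemma hadamard_orth (d : ℕ) (i i' : Fin (2 ^ d)) :
    ∑ j, Hadamard d i j * Hadamard d i' j = if i = i' then ((2:ℝ) ^ d) else 0 := by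
  induction d with
  | zero =>
    have : i = i' := Fin.ext (by have h1 := i.isLt; have h2 := i'.isLt; norm_num at h1 h2; omega)
    simp [this, Hadamard]
  | succ d ih =>
    set e := (finSumFinEquiv.trans
      (finCongr (show 2^d + 2^d = 2^(d+1) by rw [pow_succ, mul_two]))) with he
    set M := Matrix.fromBlocks (Hadamard d) (Hadamard d) (Hadamard d) (-(Hadamard d)) with hM
    have hH : ∀ a b : Fin (2^(d+1)), Hadamard (d+1) a b = M (e.symm a) (e.symm b) := fun a b => rfl
    have hii : (i = i') ↔ (e.symm i = e.symm i') := (Equiv.injective e.symm).eq_iff.symm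
    have hsum : ∑ j, Hadamard (d+1) i j * Hadamard (d+1) i' j
        = ∑ s, M (e.symm i) s * M (e.symm i') s := by
      simp only [hH]
      exact Equiv.sum_comp e.symm (fun s => M (e.symm i) s * M (e.symm i') s)
    rw [hsum]; simp only [hii]
    rcases hsi : e.symm i with a | a <;> rcases hsi' : e.symm i' with a' | a' <;>
      simp only [hM, Fintype.sum_sum_type, Matrix.fromBlocks_apply₁₁, Matrix.fromBlocks_apply₁₂,
        Matrix.fromBlocks_apply₂₁, Matrix.fromBlocks_apply₂₂, Matrix.neg_apply, mul_neg, neg_mul,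
        neg_neg, Finset.sum_neg_distrib, ih]
    · by_cases h : a = a' <;> simp [h] <;> ring
    · simp
    · simp
    · by_cases h : a = a' <;> simp [h] <;> ring

set_option linter.unnecessarySeqFocus false in
/-- Orthogonality of parity characters. -/
lemma parity_orth (d : ℕ) (P P' : Finset (Fin d)) :
    ∑ b : Fin d → Bool,
      ((∏ i ∈ P, (if b i then (1:ℝ) else -1)) * ∏ i ∈ P', (if b i then (1:ℝ) else -1))
      = if P = P' then ((2:ℝ) ^ d) else 0 := by
  have key : ∀ b : Fin d → Bool,
      (∏ i ∈ P, (if b i then (1:ℝ) else -1)) * ∏ i ∈ P', (if b i then (1:ℝ) else -1)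
      = ∏ i : Fin d, ((if i ∈ P then (if b i then (1:ℝ) else -1) else 1)
          * (if i ∈ P' then (if b i then (1:ℝ) else -1) else 1)) := by
    intro b
    rw [Finset.prod_mul_distrib, Finset.prod_ite_mem, Finset.prod_ite_mem,
      Finset.univ_inter, Finset.univ_inter]
  simp only [key]
  rw [← Fintype.prod_sum
    (f := fun (i : Fin d) (t : Bool) => (if i ∈ P then (if t then (1:ℝ) else -1) else 1)
      * (if i ∈ P' then (if t then (1:ℝ) else -1) else 1))]
  have h2 : ∀ i : Fin d,
      (∑ t : Bool, (if i ∈ P then (if t then (1:ℝ) else -1) else 1)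
        * (if i ∈ P' then (if t then (1:ℝ) else -1) else 1))
      = if ((i ∈ P) ↔ (i ∈ P')) then (2:ℝ) else 0 := by
    intro i
    by_cases hp : i ∈ P <;> by_cases hq : i ∈ P' <;>
      simp [hp, hq, Fintype.sum_bool] <;> norm_num
  simp only [h2]
  by_cases h : P = P'
  · simp only [h, iff_self, if_true, Finset.prod_const, Finset.card_univ, Fintype.card_fin]
  · rw [if_neg h]
    obtain ⟨i, hi⟩ : ∃ i, ¬((i ∈ P) ↔ (i ∈ P')) := by
      by_contra hall
      push_neg at hall
      exact h (Finset.ext fun i => (hall i))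
    exact Finset.prod_eq_zero (Finset.mem_univ i) (if_neg hi)

end DPPaperAux

open DPPaperAux

/-- any selection of distinct rows of a Hadamard matrix has κ ≥ 2;
  in particular κ(Q_{d,w}) ≥ 2. -/
theorem kappa_hadamard_rows_ge_two :
    (∀ (d l : ℕ), 1 ≤ l → ∀ r : Fin l → Fin (2 ^ d), Function.Injective r →
      kappa (fun i => Hadamard d (r i)) ≥ 2) ∧
    (∀ d w : ℕ, 1 ≤ w → w ≤ d → kappa (parityMatrix d w) ≥ 2) := by
  constructor
  · intro d l hl r hr
    have hK : Nonempty (Fin l) := ⟨⟨0, hl⟩⟩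
    refine kappa_ge_two_of_orth _ ?_ ?_
    · simp [Fintype.card_fin]
    · intro i i'
      rw [show (∑ j, Hadamard d (r i) j * Hadamard d (r i') j)
          = if r i = r i' then ((2:ℝ)^d) else 0 from hadamard_orth d (r i) (r i')]
      by_cases h : i = i'
      · simp [h]
      · rw [if_neg (fun hc => h (hr hc)), if_neg h]
  · intro d w hw hwd
    obtain ⟨P, -, hP⟩ := Finset.exists_subset_card_eq
      (s := (Finset.univ : Finset (Fin d))) (n := w) (by simpa using hwd)
    have hK : Nonempty {P : Finset (Fin d) // P.card = w} := ⟨⟨P, hP⟩⟩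
    refine kappa_ge_two_of_orth _ Fintype.card_pos ?_
    intro Q Q'
    rw [show (∑ b : Fin d → Bool, parityMatrix d w Q b * parityMatrix d w Q' b)
        = if Q.1 = Q'.1 then ((2:ℝ)^d) else 0 from parity_orth d Q.1 Q'.1]
    by_cases h : Q = Q'
    · simp [h]
    · rw [if_neg (fun hc => h (Subtype.ext hc)), if_neg h]
end
end
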